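/- arXiv:1703.07089 — 6 statements merged into one kernel-verified Lean document; each statement's English description precedes it below -/
import Mathlib

section
/- Let N, X, N_U be positive integers with N = X·N_U, X even, X ≥ 2, N_U even. Fix ε ∈ [-1/2, 1/2] and m ∈ {0,...,N_U/2-1}, and define Υ_m(υ) = sin⁻²(π(υ + mX + ε)/N) + sin⁻²(π(υ - X - mX + ε)/N) for integer υ ∈ {1,...,X-1}. Then Υ_m attains its minimum over integers υ ∈ {1,...,X-1} at υ = X/2. -/
open Real

lemma csc_sq_deriv1 {x : ℝ} (hx : sin x ≠ 0) :
    HasDerivAt (fun y => 1 / sin y ^ 2) (-(2 * (sin x * cos x)) / (sin x ^ 2) ^ 2) x := by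
  have h := ((Real.hasDerivAt_sin x).fun_pow 2).fun_inv (pow_ne_zero 2 hx)
  simpa [one_div, pow_one, mul_assoc] using h

lemma csc_sq_deriv2 {x : ℝ} (hx : sin x ≠ 0) :
    HasDerivAt (fun y => -(2 * (sin y * cos y)) / (sin y ^ 2) ^ 2)
      ((6 * cos x ^ 2 + 2 * sin x ^ 2) / sin x ^ 4) x := by
  have hu : HasDerivAt (fun y => -(2 * (sin y * cos y)))
      (-(2 * (cos x * cos x + -(sin x * sin x)))) x := by
    have := ((Real.hasDerivAt_sin x).fun_mul (Real.hasDerivAt_cos x)).const_mul (2:ℝ)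
    simpa [mul_assoc] using this.fun_neg
  have hv : HasDerivAt (fun y => (sin y ^ 2) ^ 2)
      (2 * (sin x ^ 2) ^ 1 * (2 * sin x ^ 1 * cos x)) x :=
    ((Real.hasDerivAt_sin x).pow 2).pow 2
  have h := hu.fun_div hv (pow_ne_zero 2 (pow_ne_zero 2 hx))
  refine h.congr_deriv ?_
  field_simp
  ring

lemma csc_sq_convexOn : ConvexOn ℝ (Set.Ioo 0 π) (fun x => 1 / sin x ^ 2) := by
  have hsin : ∀ x ∈ Set.Ioo (0:ℝ) π, sin x ≠ 0 := fun x hx =>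
    ne_of_gt (Real.sin_pos_of_pos_of_lt_pi hx.1 hx.2)
  have hderiv : ∀ x ∈ Set.Ioo (0:ℝ) π,
      deriv (fun y => 1 / sin y ^ 2) x = -(2 * (sin x * cos x)) / (sin x ^ 2) ^ 2 :=
    fun x hx => (csc_sq_deriv1 (hsin x hx)).deriv
  have hd2 : ∀ x ∈ Set.Ioo (0:ℝ) π,
      HasDerivAt (deriv (fun y => 1 / sin y ^ 2))
        ((6 * cos x ^ 2 + 2 * sin x ^ 2) / sin x ^ 4) x := by
    intro x hx
    refine (csc_sq_deriv2 (hsin x hx)).congr_of_eventuallyEq ?_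
    filter_upwards [isOpen_Ioo.mem_nhds hx] with y hy
    exact hderiv y hy
  refine convexOn_of_deriv2_nonneg' (convex_Ioo 0 π) ?_ ?_ ?_
  · intro x hx
    exact (csc_sq_deriv1 (hsin x hx)).differentiableAt.differentiableWithinAt
  · intro x hx
    exact (hd2 x hx).differentiableAt.differentiableWithinAt
  · intro x hx
    have := (hd2 x hx).deriv
    simp only [Function.iterate_succ, Function.iterate_zero, Function.comp_apply, id_eq]
    rw [this]
    have h4 : (0:ℝ) < sin x ^ 4 := pow_pos (Real.sin_pos_of_pos_of_lt_pi hx.1 hx.2) 4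
    positivity

lemma convex_pair {s : Set ℝ} {f : ℝ → ℝ} (hf : ConvexOn ℝ s f) {c d1 d2 : ℝ}
    (h0 : 0 ≤ d1) (h12 : d1 ≤ d2) (h1 : c - d2 ∈ s) (h2 : c + d2 ∈ s) :
    f (c - d1) + f (c + d1) ≤ f (c - d2) + f (c + d2) := by
  rcases eq_or_lt_of_le (h0.trans h12) with h | hpos
  · have hd2 : d2 = 0 := h.symm
    have hd1 : d1 = 0 := le_antisymm (h12.trans_eq hd2) h0
    simp [hd1, hd2]
  · set a := (d2 - d1) / (2 * d2) with ha_def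
    set b := (d2 + d1) / (2 * d2) with hb_def
    have ha : 0 ≤ a := div_nonneg (by linarith) (by linarith)
    have hb : 0 ≤ b := div_nonneg (by linarith) (by linarith)
    have hne : d2 ≠ 0 := ne_of_gt hpos
    have hab : a + b = 1 := by rw [ha_def, hb_def]; field_simp; ring
    have e1 : a • (c - d2) + b • (c + d2) = c + d1 := by
      simp only [smul_eq_mul, ha_def, hb_def]; field_simp; ring
    have e2 : b • (c - d2) + a • (c + d2) = c - d1 := by
      simp only [smul_eq_mul, ha_def, hb_def]; field_simp; ring
    have i1 := hf.2 h1 h2 ha hb hab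
    have i2 := hf.2 h1 h2 hb ha (by linarith)
    rw [e1] at i1; rw [e2] at i2
    simp only [smul_eq_mul] at i1 i2
    have key : a * f (c - d2) + b * f (c + d2) + (b * f (c - d2) + a * f (c + d2))
        = f (c - d2) + f (c + d2) := by linear_combination (f (c - d2) + f (c + d2)) * hab
    linarith

theorem upsilon_min_at_half_X
    (N X N_U : ℕ) (hNeq : N = X * N_U) (hXeven : Even X) (hX2 : 2 ≤ X)
    (hNUpos : 0 < N_U) (hNUeven : Even N_U)
    (ε : ℝ) (hε : |ε| ≤ 1/2)
    (m : ℕ) (hm : m ≤ N_U / 2 - 1)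
    (Υ : ℕ → ℝ)
    (hΥ : Υ = fun (υ : ℕ) => 1 / (sin (π * ((υ : ℝ) + (m : ℝ) * X + ε) / N))^2
        + 1 / (sin (π * ((υ : ℝ) - X - (m : ℝ) * X + ε) / N))^2) :
    ∀ υ : ℕ, 1 ≤ υ → υ ≤ X - 1 → Υ (X / 2) ≤ Υ υ := by
  subst hΥ
  intro υ h1 h2
  simp only
  obtain ⟨k, hk⟩ := hXeven
  obtain ⟨j, hj⟩ := hNUeven
  have hXdiv : X / 2 = k := by omega
  have hjm : m + 1 ≤ j := by omega
  have hNpos : 0 < N := by rw [hNeq]; positivity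
  have hNRpos : (0:ℝ) < N := by exact_mod_cast hNpos
  have hNne : (N:ℝ) ≠ 0 := ne_of_gt hNRpos
  have hX2k : (X:ℝ) = 2 * k := by rw [hk]; push_cast; ring
  have hNr : (N:ℝ) = (X:ℝ) * (2 * j) := by rw [hNeq, hj]; push_cast; ring
  have hjmr : (m:ℝ) + 1 ≤ j := by exact_mod_cast hjm
  have h1r : (1:ℝ) ≤ υ := by exact_mod_cast h1
  have h2r : (υ:ℝ) ≤ (X:ℝ) - 1 := by
    have : υ + 1 ≤ X := by omega
    have := (Nat.cast_le (α := ℝ)).mpr this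
    push_cast at this; linarith
  set c : ℝ := π * ((m:ℝ) * X + X / 2) / N with hc
  -- rewrite both sides in the symmetric form
  have main : ∀ t : ℝ,
      1 / sin (π * (t + (m:ℝ) * X + ε) / N) ^ 2
        + 1 / sin (π * (t - X - (m:ℝ) * X + ε) / N) ^ 2
      = 1 / sin (c + π * (t - (X:ℝ)/2 + ε) / N) ^ 2
        + 1 / sin (c - π * (t - (X:ℝ)/2 + ε) / N) ^ 2 := by
    intro t
    have ea : π * (t + (m:ℝ) * X + ε) / N = c + π * (t - (X:ℝ)/2 + ε) / N := by
      rw [hc]; ring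
    have eb : π * (t - X - (m:ℝ) * X + ε) / N = -(c - π * (t - (X:ℝ)/2 + ε) / N) := by
      rw [hc]; ring
    rw [ea, eb, Real.sin_neg, neg_sq]
  rw [main, main]
  have hcast : ((X/2 : ℕ):ℝ) - (X:ℝ)/2 + ε = ε := by
    rw [hXdiv, hX2k]; push_cast; ring
  rw [hcast]
  -- symmetrize to absolute values
  have habs : ∀ e : ℝ,
      1 / sin (c + e) ^ 2 + 1 / sin (c - e) ^ 2
        = 1 / sin (c + |e|) ^ 2 + 1 / sin (c - |e|) ^ 2 := by
    intro e
    rcases abs_cases e with ⟨h, _⟩ | ⟨h, _⟩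
    · rw [h]
    · rw [h, show c + -e = c - e by ring, show c - -e = c + e by ring, add_comm]
  rw [habs (π * ε / N), habs (π * ((υ:ℝ) - (X:ℝ)/2 + ε) / N)]
  have hEabs : ∀ t : ℝ, |π * t / N| = π * |t| / N := by
    intro t
    rw [abs_div, abs_mul, abs_of_nonneg Real.pi_nonneg, Nat.abs_cast]
  rw [hEabs, hEabs]
  set B : ℝ := |(υ:ℝ) - (X:ℝ)/2 + ε| with hB
  -- key bounds
  have hBle : B ≤ (X:ℝ)/2 - 1/2 := by
    have h0 : |(υ:ℝ) - (X:ℝ)/2| ≤ (X:ℝ)/2 - 1 :=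
      abs_le.mpr ⟨by linarith, by linarith⟩
    have h1' : B ≤ |(υ:ℝ) - (X:ℝ)/2| + |ε| := by
      rw [hB]; exact abs_add_le _ _
    linarith
  have hεB : |ε| ≤ B := by
    by_cases hup : υ = k
    · have : (υ:ℝ) - (X:ℝ)/2 + ε = ε := by rw [hup, hX2k]; ring
      rw [hB, this]
    · have hne : (υ:ℤ) - (k:ℤ) ≠ 0 := by
        intro h; apply hup; omega
      have h1' : (1:ℤ) ≤ |(υ:ℤ) - (k:ℤ)| := Int.one_le_abs hne
      have hge1 : (1:ℝ) ≤ |(υ:ℝ) - (X:ℝ)/2| := by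
        have : ((1:ℤ):ℝ) ≤ (|(υ:ℤ) - (k:ℤ)| : ℤ) := by exact_mod_cast h1'
        push_cast at this
        rw [hX2k]
        calc (1:ℝ) ≤ |(υ:ℝ) - (k:ℝ)| := this
          _ = |(υ:ℝ) - 2 * (k:ℝ) / 2| := by ring_nf
      have htri : |(υ:ℝ) - (X:ℝ)/2| ≤ B + |ε| := by
        calc |(υ:ℝ) - (X:ℝ)/2| = |((υ:ℝ) - (X:ℝ)/2 + ε) + (-ε)| := by ring_nf
          _ ≤ |(υ:ℝ) - (X:ℝ)/2 + ε| + |(-ε)| := abs_add_le _ _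
          _ = B + |ε| := by rw [abs_neg, hB]
      linarith
  have hmX : ((m:ℝ) + 1) * X ≤ (N:ℝ) / 2 := by
    nlinarith [mul_le_mul_of_nonneg_right hjmr (Nat.cast_nonneg X : (0:ℝ) ≤ X)]
  have hmXpos : (0:ℝ) ≤ (m:ℝ) * X := by positivity
  have hεpos : (0:ℝ) ≤ |ε| := abs_nonneg _
  have hBpos : (0:ℝ) ≤ B := abs_nonneg _
  -- membership
  have hlow : c - π * B / N ∈ Set.Ioo 0 π := by
    constructor
    · have : c - π * B / N = π * ((m:ℝ) * X + X/2 - B) / N := by rw [hc]; ring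
      rw [this]
      apply div_pos (mul_pos pi_pos (by linarith)) hNRpos
    · have hd2 : (0:ℝ) ≤ π * B / N := by positivity
      have hup : c + π * B / N < π := by
        have : c + π * B / N = π * ((m:ℝ) * X + X/2 + B) / N := by rw [hc]; ring
        rw [this, div_lt_iff₀ hNRpos]
        have hS : (m:ℝ) * X + X/2 + B < N := by
          linarith [hX2k, hNRpos, hBle, hmX]
        calc π * ((m:ℝ) * X + X/2 + B) < π * N :=
              (mul_lt_mul_iff_right₀ pi_pos).mpr hS
          _ = π * N := rfl
      linarith
  have hhigh : c + π * B / N ∈ Set.Ioo 0 π := by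
    have hd2 : (0:ℝ) ≤ π * B / N := by positivity
    constructor
    · have := hlow.1; linarith
    · have : c + π * B / N = π * ((m:ℝ) * X + X/2 + B) / N := by rw [hc]; ring
      rw [this, div_lt_iff₀ hNRpos]
      have hS : (m:ℝ) * X + X/2 + B < N := by
        linarith [hX2k, hNRpos, hBle, hmX]
      exact (mul_lt_mul_iff_right₀ pi_pos).mpr hS
  have hd12 : π * |ε| / N ≤ π * B / N := by gcongr
  have hd1 : (0:ℝ) ≤ π * |ε| / N := by positivity
  have := convex_pair csc_sq_convexOn hd1 hd12 hlow hhigh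
  linarith
end

section
/- A sequence s of length N has constant amplitude and zero autocorrelation (CAZAC) if and only if its discrete Fourier transform also has constant amplitude and zero autocorrelation. -/
open Complex Finset

/-- Periodic autocorrelation of a sequence on `ZMod N`. -/
noncomputable def autocorr {N : ℕ} [NeZero N] (s : ZMod N → ℂ) (τ : ZMod N) : ℂ :=
  ∑ n : ZMod N, s n * (starRingEnd ℂ) (s (n - τ))

/-- Constant (nonzero) amplitude and zero autocorrelation at all nonzero lags. -/
def IsCAZAC {N : ℕ} [NeZero N] (s : ZMod N → ℂ) : Prop :=
  (∃ c : ℝ, 0 < c ∧ ∀ n : ZMod N, ‖s n‖ = c) ∧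
  (∀ τ : ZMod N, τ ≠ 0 → autocorr s τ = 0)

/-- Discrete Fourier transform of a sequence on `ZMod N`. -/
noncomputable def dft {N : ℕ} [NeZero N] (s : ZMod N → ℂ) : ZMod N → ℂ :=
  fun k => ∑ n : ZMod N, s n * Complex.exp (-2 * Real.pi * I * (n.val : ℂ) * (k.val : ℂ) / N)

variable {N : ℕ} [NeZero N]

lemma sum_char (t : ZMod N) :
    ∑ k : ZMod N, ZMod.stdAddChar (t * k) = if t = 0 then (N : ℂ) else 0 := by
  split_ifs with h
  · simp only [h, zero_mul, AddChar.map_zero_eq_one, sum_const, card_univ, ZMod.card,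
      nsmul_eq_mul, mul_one]
  · exact AddChar.sum_eq_zero_of_ne_one (ZMod.isPrimitive_stdAddChar N h)

lemma cast_val_eq (a : ZMod N) : ((a.val : ℤ) : ZMod N) = a := by
  push_cast
  simp [ZMod.natCast_val, ZMod.cast_id]

lemma conj_char (a : ZMod N) :
    (starRingEnd ℂ) (ZMod.stdAddChar a) = ZMod.stdAddChar (-a) := by
  rw [← cast_val_eq a, ← Int.cast_neg, ZMod.stdAddChar_coe, ZMod.stdAddChar_coe,
    ← Complex.exp_conj]
  congr 1
  push_cast
  rw [map_div₀]
  simp only [map_mul, map_neg, map_ofNat, Complex.conj_ofReal, Complex.conj_I, map_natCast]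
  ring

lemma exp_eq (n k : ZMod N) :
    Complex.exp (-2 * Real.pi * I * (n.val : ℂ) * (k.val : ℂ) / N)
      = ZMod.stdAddChar (-(n * k)) := by
  have h : (-(n * k) : ZMod N) = ((-(n.val * k.val) : ℤ) : ZMod N) := by
    push_cast
    simp [ZMod.natCast_val, ZMod.cast_id]
  rw [h, ZMod.stdAddChar_coe]
  push_cast
  ring_nf

/-- Lemma A: |dft s k|² as a character sum of the autocorrelation. -/
lemma dft_mul_conj (s : ZMod N → ℂ) (k : ZMod N) :
    dft s k * (starRingEnd ℂ) (dft s k)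
      = ∑ τ : ZMod N, autocorr s τ * ZMod.stdAddChar (-(τ * k)) := by
  have lhs : dft s k * (starRingEnd ℂ) (dft s k)
      = ∑ n : ZMod N, ∑ m : ZMod N,
          s n * (starRingEnd ℂ) (s m) * ZMod.stdAddChar (-((n - m) * k)) := by
    rw [dft, map_sum, Finset.sum_mul_sum]
    refine Finset.sum_congr rfl fun n _ => Finset.sum_congr rfl fun m _ => ?_
    rw [exp_eq, map_mul, exp_eq, conj_char, neg_neg]
    rw [show s n * ZMod.stdAddChar (-(n * k)) *
        ((starRingEnd ℂ) (s m) * ZMod.stdAddChar (m * k))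
        = s n * (starRingEnd ℂ) (s m) *
          (ZMod.stdAddChar (-(n * k)) * ZMod.stdAddChar (m * k)) from by ring,
      ← AddChar.map_add_eq_mul, show (-(n * k) + m * k : ZMod N) = -((n - m) * k) from by ring]
  have rhs : (∑ τ : ZMod N, autocorr s τ * ZMod.stdAddChar (-(τ * k)))
      = ∑ n : ZMod N, ∑ m : ZMod N,
          s n * (starRingEnd ℂ) (s m) * ZMod.stdAddChar (-((n - m) * k)) := by
    have h1 : (∑ τ : ZMod N, autocorr s τ * ZMod.stdAddChar (-(τ * k)))
        = ∑ τ : ZMod N, ∑ n : ZMod N,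
            s n * (starRingEnd ℂ) (s (n - τ)) * ZMod.stdAddChar (-(τ * k)) :=
      Finset.sum_congr rfl fun τ _ => by rw [autocorr, Finset.sum_mul]
    rw [h1, Finset.sum_comm]
    refine Finset.sum_congr rfl fun n _ => ?_
    refine (Fintype.sum_equiv (Equiv.subLeft n) _ _ fun m => ?_).symm
    simp only [Equiv.subLeft_apply, sub_sub_cancel]
  rw [lhs, rhs]

/-- Lemma B: autocorrelation of the DFT. -/
lemma autocorr_dft (s : ZMod N → ℂ) (τ : ZMod N) :
    autocorr (dft s) τ
      = (N : ℂ) * ∑ n : ZMod N, s n * (starRingEnd ℂ) (s n) * ZMod.stdAddChar (-(n * τ)) := by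
  have step1 : autocorr (dft s) τ
      = ∑ k : ZMod N, ∑ n : ZMod N, ∑ m : ZMod N,
          s n * (starRingEnd ℂ) (s m) * ZMod.stdAddChar (-(m * τ))
            * ZMod.stdAddChar ((m - n) * k) := by
    rw [autocorr]
    refine Finset.sum_congr rfl fun k _ => ?_
    rw [dft, dft, map_sum, Finset.sum_mul_sum]
    refine Finset.sum_congr rfl fun n _ => Finset.sum_congr rfl fun m _ => ?_
    rw [exp_eq, map_mul, exp_eq, conj_char, neg_neg]
    rw [show s n * ZMod.stdAddChar (-(n * k)) *
        ((starRingEnd ℂ) (s m) * ZMod.stdAddChar (m * (k - τ)))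
        = s n * (starRingEnd ℂ) (s m) *
          (ZMod.stdAddChar (-(n * k)) * ZMod.stdAddChar (m * (k - τ))) from by ring,
      ← AddChar.map_add_eq_mul,
      show (-(n * k) + m * (k - τ) : ZMod N) = -(m * τ) + (m - n) * k from by ring,
      AddChar.map_add_eq_mul]
    ring
  rw [step1, Finset.sum_comm]
  have h2 : ∀ n ∈ (Finset.univ : Finset (ZMod N)),
      (∑ k : ZMod N, ∑ m : ZMod N,
          s n * (starRingEnd ℂ) (s m) * ZMod.stdAddChar (-(m * τ))
            * ZMod.stdAddChar ((m - n) * k))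
        = ∑ m : ZMod N,
            s n * (starRingEnd ℂ) (s m) * ZMod.stdAddChar (-(m * τ))
              * ∑ k : ZMod N, ZMod.stdAddChar ((m - n) * k) := by
    intro n _
    rw [Finset.sum_comm]
    exact Finset.sum_congr rfl fun m _ => by rw [← Finset.mul_sum]
  rw [Finset.sum_congr rfl h2, Finset.mul_sum]
  refine Finset.sum_congr rfl fun n _ => ?_
  simp only [sum_char, sub_eq_zero, mul_ite, mul_zero]
  rw [Finset.sum_ite_eq' Finset.univ n
    (fun m => s n * (starRingEnd ℂ) (s m) * ZMod.stdAddChar (-(m * τ)) * (N : ℂ))]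
  simp only [mem_univ, if_true]
  ring

/-- Lemma C: Fourier inversion for character sums. -/
lemma inversion (F : ZMod N → ℂ) (m : ZMod N) :
    ∑ τ : ZMod N, (∑ n : ZMod N, F n * ZMod.stdAddChar (-(n * τ))) * ZMod.stdAddChar (m * τ)
      = (N : ℂ) * F m := by
  have step1 : ∀ τ : ZMod N,
      (∑ n : ZMod N, F n * ZMod.stdAddChar (-(n * τ))) * ZMod.stdAddChar (m * τ)
        = ∑ n : ZMod N, F n * ZMod.stdAddChar ((m - n) * τ) := by
    intro τ
    rw [Finset.sum_mul]
    refine Finset.sum_congr rfl fun n _ => ?_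
    rw [mul_assoc, ← AddChar.map_add_eq_mul,
      show (-(n * τ) + m * τ : ZMod N) = (m - n) * τ from by ring]
  simp only [step1]
  rw [Finset.sum_comm]
  have step2 : ∀ n : ZMod N,
      (∑ τ : ZMod N, F n * ZMod.stdAddChar ((m - n) * τ))
        = if m = n then F n * (N : ℂ) else 0 := by
    intro n
    rw [← Finset.mul_sum, sum_char]
    simp only [sub_eq_zero]
    split_ifs <;> simp
  simp only [step2]
  rw [Finset.sum_ite_eq Finset.univ m (fun n => F n * (N : ℂ))]
  simp only [mem_univ, if_true]
  ring

theorem cazac_iff_dft_cazac (N : ℕ) [NeZero N] (s : ZMod N → ℂ) :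
    IsCAZAC s ↔ IsCAZAC (dft s) := by
  have hN : (N : ℂ) ≠ 0 := Nat.cast_ne_zero.mpr (NeZero.ne N)
  have hNpos : 0 < (N : ℝ) := by
    exact_mod_cast Nat.pos_of_ne_zero (NeZero.ne N)
  constructor
  · rintro ⟨⟨c, hc, habs⟩, hzero⟩
    have hsn : ∀ n : ZMod N, s n * (starRingEnd ℂ) (s n) = ((c ^ 2 : ℝ) : ℂ) := by
      intro n
      rw [Complex.mul_conj]
      norm_cast
      rw [← Complex.sq_norm, habs n]
    have hauto0 : autocorr s 0 = (((N : ℝ) * c ^ 2 : ℝ) : ℂ) := by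
      rw [autocorr]
      simp only [sub_zero, hsn, Finset.sum_const, card_univ, ZMod.card, nsmul_eq_mul]
      push_cast
      ring
    have hval : ∀ k, dft s k * (starRingEnd ℂ) (dft s k) = (((N : ℝ) * c ^ 2 : ℝ) : ℂ) := by
      intro k
      rw [dft_mul_conj,
        Fintype.sum_eq_single 0 (fun τ hτ => by rw [hzero τ hτ, zero_mul]), hauto0]
      simp
    constructor
    · refine ⟨Real.sqrt ((N : ℝ) * c ^ 2), by positivity, fun k => ?_⟩
      rw [Complex.norm_def]
      congr 1
      have h := hval k
      rw [Complex.mul_conj] at h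
      exact_mod_cast h
    · intro τ hτ
      rw [autocorr_dft]
      have h : ∀ n : ZMod N, s n * (starRingEnd ℂ) (s n) * ZMod.stdAddChar (-(n * τ))
          = ((c ^ 2 : ℝ) : ℂ) * ZMod.stdAddChar ((-τ) * n) := by
        intro n
        rw [hsn, show (-(n * τ) : ZMod N) = (-τ) * n from by ring]
      rw [Finset.sum_congr rfl fun n _ => h n, ← Finset.mul_sum, sum_char,
        if_neg (by simpa using hτ)]
      ring
  · rintro ⟨⟨d, hd, habs⟩, hzero⟩
    have hval : ∀ k, dft s k * (starRingEnd ℂ) (dft s k) = ((d ^ 2 : ℝ) : ℂ) := by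
      intro k
      rw [Complex.mul_conj]
      norm_cast
      rw [← Complex.sq_norm, habs k]
    have hA : ∀ k : ZMod N, ∑ τ : ZMod N, autocorr s τ * ZMod.stdAddChar (-(τ * k))
        = ((d ^ 2 : ℝ) : ℂ) := fun k => by rw [← dft_mul_conj, hval]
    have hzero' : ∀ σ : ZMod N, σ ≠ 0 → autocorr s σ = 0 := by
      intro σ hσ
      have hinv := inversion (autocorr s) σ
      rw [Finset.sum_congr rfl (fun τ (_ : τ ∈ Finset.univ) => by rw [hA τ]),
        ← Finset.mul_sum, sum_char, if_neg hσ, mul_zero] at hinv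
      exact ((mul_eq_zero.mp hinv.symm).resolve_left hN)
    have hsum0 : autocorr (dft s) 0 = (((N : ℝ) * d ^ 2 : ℝ) : ℂ) := by
      rw [autocorr]
      simp only [sub_zero]
      rw [Finset.sum_congr rfl fun k (_ : k ∈ Finset.univ) => hval k]
      simp only [Finset.sum_const, card_univ, ZMod.card, nsmul_eq_mul]
      push_cast
      ring
    refine ⟨⟨Real.sqrt (d ^ 2 / (N : ℝ)), by positivity, fun m => ?_⟩, hzero'⟩
    have hinv := inversion (fun n => s n * (starRingEnd ℂ) (s n)) m
    have key : (N : ℂ) * ((N : ℂ) * (s m * (starRingEnd ℂ) (s m)))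
        = (((N : ℝ) * d ^ 2 : ℝ) : ℂ) := by
      rw [← hinv, Finset.mul_sum]
      have h : ∀ τ ∈ (Finset.univ : Finset (ZMod N)),
          (N : ℂ) * ((∑ n : ZMod N, (s n * (starRingEnd ℂ) (s n))
              * ZMod.stdAddChar (-(n * τ))) * ZMod.stdAddChar (m * τ))
            = autocorr (dft s) τ * ZMod.stdAddChar (m * τ) := by
        intro τ _
        rw [← mul_assoc, ← autocorr_dft]
      rw [Finset.sum_congr rfl h,
        Fintype.sum_eq_single 0 (fun τ hτ => by rw [hzero τ hτ, zero_mul]), hsum0]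
      simp
    have hz : s m * (starRingEnd ℂ) (s m) = ((d ^ 2 / (N : ℝ) : ℝ) : ℂ) := by
      have h2 : ((N : ℂ) * (N : ℂ)) * (s m * (starRingEnd ℂ) (s m))
          = ((N : ℂ) * (N : ℂ)) * ((d ^ 2 / (N : ℝ) : ℝ) : ℂ) := by
        push_cast at key ⊢
        rw [mul_assoc, key]
        field_simp
      exact mul_left_cancel₀ (mul_ne_zero hN hN) h2
    rw [Complex.norm_def]
    congr 1
    rw [Complex.mul_conj] at hz
    exact_mod_cast hz
end

section
/- For any even positive integer N_U, the Chu sequence s(n) = exp(iπ n²/N_U), n ∈ ℤ/N_U, has constant amplitude 1 and zero periodic autocorrelation: Σ_{n=0}^{N_U-1} s(n)·conj(s(n-τ)) = 0 for every τ ≢ 0 mod N_U. -/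
open Complex

private lemma chu_exp_congr (N : ℕ) (hN : N ≠ 0) (m : ℕ) (hm : N = 2 * m)
    (u v : ℤ) (h : (N : ℤ) ∣ (u - v)) :
    Complex.exp (Real.pi * I * (u : ℂ)^2 / N) = Complex.exp (Real.pi * I * (v : ℂ)^2 / N) := by
  obtain ⟨k, hk⟩ := h
  have hu : u = v + N * k := by linarith
  set j : ℤ := v * k + m * k ^ 2 with hj
  have hNC : (N : ℂ) ≠ 0 := Nat.cast_ne_zero.mpr hN
  have hu2 : (u : ℂ)^2 = (v : ℂ)^2 + 2 * N * j := by
    have : u ^ 2 = v ^ 2 + 2 * N * j := by subst hu; rw [hj, hm]; push_cast; ring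
    exact_mod_cast congrArg (fun z : ℤ => (z : ℂ)) this
  rw [hu2]
  have : (Real.pi : ℂ) * I * ((v : ℂ)^2 + 2 * N * j) / N
      = Real.pi * I * (v : ℂ)^2 / N + (j : ℂ) * (2 * Real.pi * I) := by
    field_simp
  rw [this, Complex.exp_add, Complex.exp_int_mul_two_pi_mul_I, mul_one]

theorem chu_sequence_cazac
    (N_U : ℕ) (hpos : 0 < N_U) (heven : Even N_U) [NeZero N_U]
    (s : ZMod N_U → ℂ)
    (hs : ∀ n : ZMod N_U, s n = Complex.exp (Real.pi * I * ((n.val : ℂ))^2 / N_U)) :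
    (∀ n : ZMod N_U, ‖s n‖ = 1) ∧
    (∀ τ : ZMod N_U, τ ≠ 0 →
      ∑ n : ZMod N_U, s n * (starRingEnd ℂ) (s (n - τ)) = 0) := by
  have hN0 : N_U ≠ 0 := hpos.ne'
  have hNC : (N_U : ℂ) ≠ 0 := Nat.cast_ne_zero.mpr hN0
  obtain ⟨m, hm⟩ := heven
  have hm2 : N_U = 2 * m := by omega
  constructor
  · intro n
    rw [hs n, show (↑Real.pi * I * ((n.val : ℂ))^2 / N_U)
        = ((Real.pi * (n.val : ℝ)^2 / N_U : ℝ) : ℂ) * I by push_cast; ring,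
      Complex.norm_exp_ofReal_mul_I]
  · intro τ hτ
    set t : ℕ := τ.val with ht
    have htpos : 0 < t := Nat.pos_of_ne_zero (fun h => hτ ((ZMod.val_eq_zero τ).mp h))
    have htlt : t < N_U := ZMod.val_lt τ
    set ζ : ℂ := Complex.exp (2 * Real.pi * I * t / N_U) with hζ
    set c : ℂ := Complex.exp (-(Real.pi * I * (t : ℂ)^2 / N_U)) with hc
    have hterm : ∀ n : ZMod N_U,
        s n * (starRingEnd ℂ) (s (n - τ)) = c * ζ ^ (n.val) := by
      intro n
      have hconj : (starRingEnd ℂ) (s (n - τ))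
          = Complex.exp (-(Real.pi * I * ((n - τ).val : ℂ)^2 / N_U)) := by
        rw [hs (n - τ), ← Complex.exp_conj]
        congr 1
        rw [map_div₀, map_mul, map_mul, map_pow, Complex.conj_ofReal, Complex.conj_I,
          Complex.conj_natCast, Complex.conj_natCast]
        ring
      have hdvd : (N_U : ℤ) ∣ (((n - τ).val : ℤ) - ((n.val : ℤ) - (t : ℤ))) := by
        have : ((((n - τ).val : ℤ) - ((n.val : ℤ) - (t : ℤ)) : ℤ) : ZMod N_U) = 0 := by
          push_cast
          simp [ht, ZMod.natCast_val, ZMod.cast_id]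
        exact (ZMod.intCast_zmod_eq_zero_iff_dvd _ _).mp this
      have hb : Complex.exp (Real.pi * I * ((n - τ).val : ℂ)^2 / N_U)
          = Complex.exp (Real.pi * I * (((n.val : ℤ) - (t : ℤ) : ℤ) : ℂ)^2 / N_U) := by
        have := chu_exp_congr N_U hN0 m hm2 ((n - τ).val : ℤ) ((n.val : ℤ) - (t : ℤ)) hdvd
        simpa using this
      push_cast at hb
      have hconj' : (starRingEnd ℂ) (s (n - τ))
          = Complex.exp (-(Real.pi * I * (((n.val : ℂ) - (t : ℂ)))^2 / N_U)) := by
        rw [hconj, Complex.exp_neg, Complex.exp_neg, hb]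
      rw [hs n, hconj', ← Complex.exp_add, hζ, hc, ← Complex.exp_nat_mul,
        ← Complex.exp_add]
      congr 1
      field_simp
      ring
    rw [Finset.sum_congr rfl (fun n _ => hterm n), ← Finset.mul_sum]
    have hζN : ζ ^ N_U = 1 := by
      rw [hζ, ← Complex.exp_nat_mul]
      have : (N_U : ℂ) * (2 * Real.pi * I * t / N_U) = (t : ℂ) * (2 * Real.pi * I) := by
        field_simp
      rw [this]
      exact_mod_cast Complex.exp_int_mul_two_pi_mul_I (t : ℤ)
    have hζ1 : ζ ≠ 1 := by
      intro h
      rw [hζ, Complex.exp_eq_one_iff] at h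
      obtain ⟨k, hk⟩ := h
      have hπ : (Real.pi : ℂ) ≠ 0 := Complex.ofReal_ne_zero.mpr Real.pi_ne_zero
      have : (t : ℂ) = (k : ℂ) * N_U := by
        have h2 : (2 : ℂ) * Real.pi * I ≠ 0 :=
          mul_ne_zero (mul_ne_zero two_ne_zero hπ) Complex.I_ne_zero
        field_simp at hk
        apply mul_left_cancel₀ h2
        linear_combination (2 * (Real.pi : ℂ) * I) * hk
      have : (t : ℤ) = k * N_U := by exact_mod_cast this
      have : k * (N_U : ℤ) < N_U := by omega
      have hk1 : k < 1 := by
        by_contra h'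
        push_neg at h'
        nlinarith [Int.natCast_pos.mpr hpos]
      have hk0 : k ≤ 0 := by omega
      nlinarith [Int.natCast_pos.mpr hpos]
    have hsum : ∑ n : ZMod N_U, ζ ^ (n.val) = ∑ k ∈ Finset.range N_U, ζ ^ k := by
      refine Finset.sum_nbij' (fun n => n.val) (fun k => (k : ZMod N_U)) ?_ ?_ ?_ ?_ ?_
      · intro n _; exact Finset.mem_range.mpr (ZMod.val_lt n)
      · intro k _; exact Finset.mem_univ _
      · intro n _; simp [ZMod.natCast_val, ZMod.cast_id]
      · intro k hk; exact ZMod.val_cast_of_lt (Finset.mem_range.mp hk)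
      · intro n _; rfl
    rw [hsum, geom_sum_eq hζ1, hζN]
    simp
end

section
/- For a frequency-domain training sequence that is nonzero exactly on a pilot index set C ⊆ ℤ/N, a circular frequency shift by an integer ℓ (induced by an integer CFO) maps the support to C + ℓ (mod N). If the pilot spacings of a subset D ⊆ C satisfy the distinct circular differences condition — ((d_{σ(n+1)} - d_n)) mod N are pairwise distinct over n — then the shift ℓ is uniquely determined by the shifted support: if (D + ℓ₁) mod N = (D + ℓ₂) mod N with D having all pairwise circular gaps between consecutive elements distinct and |D| ≥ 2, |D| < N, then ℓ₁ ≡ ℓ₂ (mod N). -/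
lemma zmod_val_sub_of_lt {N : ℕ} [NeZero N] {x y : ZMod N} (h : x.val < y.val) :
    (x - y).val = N - (y.val - x.val) := by
  have hne : y - x ≠ 0 := by
    intro h0
    rw [sub_eq_zero] at h0
    rw [h0] at h
    omega
  have h1 : (y - x).val = y.val - x.val := ZMod.val_sub (le_of_lt h)
  have h2 : x - y = -(y - x) := by ring
  rw [h2, ZMod.neg_val, if_neg hne, h1]

lemma key_lemma {N K : ℕ} [NeZero N] [NeZero K] (hK2 : 2 ≤ K)
    (d : Fin K → ZMod N)
    (hmono : ∀ n n' : Fin K, n < n' → (d n).val < (d n').val)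
    (n n' : Fin K) (h1 : n' ≠ n) (h2 : n' ≠ n + 1) :
    (d (n + 1) - d n).val < (d n' - d n).val := by
  have hKpos : 0 < K := Nat.pos_of_ne_zero (NeZero.ne K)
  have hvlt : ∀ m : Fin K, (d m).val < N := fun m => ZMod.val_lt (d m)
  by_cases hw : n.val + 1 < K
  · -- no wrap : (n+1).val = n.val + 1
    have hsucc : (n + 1).val = n.val + 1 := by
      rw [Fin.add_def]
      simp [Nat.mod_eq_of_lt hw]
    have hlt : n < n + 1 := by
      rw [Fin.lt_def, hsucc]; omega
    have hac : (d n).val < (d (n + 1)).val := hmono _ _ hlt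
    have hx : (d (n + 1) - d n).val = (d (n + 1)).val - (d n).val :=
      ZMod.val_sub (le_of_lt hac)
    rcases lt_trichotomy n' n with hcase | hcase | hcase
    · -- n' < n
      have hab : (d n').val < (d n).val := hmono _ _ hcase
      have hy : (d n' - d n).val = N - ((d n).val - (d n').val) :=
        zmod_val_sub_of_lt hab
      have := hvlt (n + 1)
      omega
    · exact absurd hcase h1
    · -- n < n'
      have hn1 : n + 1 < n' := by
        rw [Fin.lt_def, hsucc]
        rw [Fin.lt_def] at hcase
        rcases Nat.lt_or_ge (n.val + 1) n'.val with h | h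
        · exact h
        · exfalso; apply h2; apply Fin.ext; rw [hsucc]; omega
      have hbc : (d (n + 1)).val < (d n').val := hmono _ _ hn1
      have hy : (d n' - d n).val = (d n').val - (d n).val :=
        ZMod.val_sub (le_of_lt (lt_trans hac hbc))
      omega
  · -- wrap: n.val = K - 1, n + 1 = 0
    have hnval : n.val = K - 1 := by have := n.isLt; omega
    have h1v : ((1 : Fin K) : ℕ) = 1 := by
      rcases K with _ | K'
      · omega
      · simp [Fin.val_one']; omega
    have hsv : (n + 1).val = (n.val + ((1 : Fin K) : ℕ)) % K := Fin.val_add n 1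
    rw [h1v, hnval] at hsv
    have hKK : K - 1 + 1 = K := by omega
    rw [hKK, Nat.mod_self] at hsv
    have hsv0 : (n + 1).val = 0 := hsv
    have hsucc : n + 1 = 0 := by
      apply Fin.ext
      rw [Fin.val_zero, hsv0]
    have hn'v : n'.val ≠ 0 := by
      intro h
      apply h2
      apply Fin.ext
      rw [hsucc, Fin.val_zero, h]
    have hn'0 : (0 : Fin K) < n' := by
      rw [Fin.lt_def, Fin.val_zero]
      omega
    have hn'n : n' < n := by
      rw [Fin.lt_def, hnval]
      have := n'.isLt
      rcases Nat.lt_or_ge n'.val (K - 1) with h | h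
      · exact h
      · exfalso; apply h1; apply Fin.ext; omega
    have h0b : (d 0).val < (d n').val := hmono _ _ hn'0
    have hba : (d n').val < (d n).val := hmono _ _ hn'n
    have hx : (d (n + 1) - d n).val = N - ((d n).val - (d (n + 1)).val) := by
      apply zmod_val_sub_of_lt
      rw [hsucc]
      calc (d 0).val < (d n').val := h0b
        _ < (d n).val := hba
    have hy : (d n' - d n).val = N - ((d n).val - (d n').val) :=
      zmod_val_sub_of_lt hba
    rw [hsucc] at hx ⊢
    have := hvlt n
    omega

theorem distinct_gaps_shift_injective
    (N : ℕ) [NeZero N]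
    (D : Finset (ZMod N)) (hcard2 : 2 ≤ D.card) (hcardN : D.card < N)
    (K : ℕ) [NeZero K] (hK : K = D.card)
    (d : Fin K → ZMod N)
    (hrange : ∀ x : ZMod N, x ∈ D ↔ ∃ n : Fin K, d n = x)
    (hmono : ∀ n n' : Fin K, n < n' → (d n).val < (d n').val)
    (g : Fin K → ZMod N)
    (hg : ∀ n : Fin K, g n = d (n + 1) - d n)
    (hgaps : Function.Injective g)
    (ℓ₁ ℓ₂ : ZMod N)
    (hshift : D.image (fun x => x + ℓ₁) = D.image (fun x => x + ℓ₂)) :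
    ℓ₁ = ℓ₂ := by
  set ℓ : ZMod N := ℓ₁ - ℓ₂ with hℓ
  have hK2 : 2 ≤ K := hK ▸ hcard2
  have h1v : ((1 : Fin K) : ℕ) = 1 := by
    rcases K with _ | K'
    · omega
    · simp [Fin.val_one']; omega
  have hKK : K - 1 + 1 = K := by omega
  -- D is invariant under + ℓ
  have hmem : ∀ x ∈ D, x + ℓ ∈ D := by
    intro x hx
    have h1 : x + ℓ₁ ∈ D.image (fun y => y + ℓ₂) := by
      rw [← hshift]; exact Finset.mem_image_of_mem _ hx
    obtain ⟨y, hy, hyx⟩ := Finset.mem_image.mp h1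
    have : y = x + ℓ := by rw [hℓ]; linear_combination hyx
    rwa [← this]
  -- d is injective
  have hdinj : Function.Injective d := by
    intro a b hab
    rcases lt_trichotomy a b with h | h | h
    · exact absurd (congrArg ZMod.val hab) (Nat.ne_of_lt (hmono _ _ h))
    · exact h
    · exact absurd (congrArg ZMod.val hab) (Nat.ne_of_gt (hmono _ _ h))
  -- the index permutation induced by + ℓ
  have hex : ∀ n : Fin K, ∃ m : Fin K, d m = d n + ℓ := by
    intro n
    have hdn : d n ∈ D := (hrange (d n)).mpr ⟨n, rfl⟩
    exact (hrange (d n + ℓ)).mp (hmem _ hdn)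
  choose π hπ using hex
  have hπinj : Function.Injective π := by
    intro a b hab
    apply hdinj
    have := (hπ a).symm.trans ((congrArg d hab).trans (hπ b))
    exact add_right_cancel this
  have hπbij : Function.Bijective π := Finite.injective_iff_bijective.mp hπinj
  have hne1 : ∀ n : Fin K, n + 1 ≠ n := by
    intro n h
    have hv := congrArg Fin.val h
    rw [Fin.val_add, h1v] at hv
    by_cases hw : n.val + 1 < K
    · rw [Nat.mod_eq_of_lt hw] at hv; omega
    · have hn : n.val = K - 1 := by have := n.isLt; omega
      rw [hn, hKK, Nat.mod_self] at hv
      omega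
  set v : Fin K → ℕ := fun n => (d (n + 1) - d n).val with hv
  have hkey : ∀ n : Fin K, (d (π (n + 1)) - d (π n)).val = v n := by
    intro n
    have : d (π (n + 1)) - d (π n) = d (n + 1) - d n := by
      rw [hπ (n + 1), hπ n]; ring
    rw [this]
  have hπne : ∀ n : Fin K, π (n + 1) ≠ π n := fun n h => hne1 n (hπinj h)
  have hle : ∀ n : Fin K, v (π n) ≤ v n := by
    intro n
    rcases eq_or_ne (π (n + 1)) (π n + 1) with he | he
    · have : v (π n) = v n := by rw [hv]; dsimp only; rw [← he, hkey n]
      exact le_of_eq this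
    · have := key_lemma hK2 d hmono (π n) (π (n + 1)) (hπne n) he
      rw [hkey n] at this
      exact le_of_lt this
  have hsum : ∑ n : Fin K, v (π n) = ∑ n : Fin K, v n :=
    Function.Bijective.sum_comp hπbij v
  have heq : ∀ n : Fin K, v (π n) = v n := by
    by_contra h
    push_neg at h
    obtain ⟨n0, hn0⟩ := h
    have hlt : v (π n0) < v n0 := lt_of_le_of_ne (hle n0) hn0
    have := Finset.sum_lt_sum (fun i _ => hle i) ⟨n0, Finset.mem_univ n0, hlt⟩
    omega
  have hcomm : ∀ n : Fin K, π (n + 1) = π n + 1 := by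
    intro n
    by_contra he
    have hlt := key_lemma hK2 d hmono (π n) (π (n + 1)) (hπne n) he
    rw [hkey n, ← heq n] at hlt
    exact absurd hlt (lt_irrefl _)
  have hgfix : ∀ n : Fin K, g (π n) = g n := by
    intro n
    rw [hg, hg, ← hcomm n, hπ (n + 1), hπ n]
    ring
  have hπid : ∀ n : Fin K, π n = n := fun n => hgaps (hgfix n)
  have h0 : d 0 = d 0 + ℓ := by rw [← hπ 0, hπid 0]
  have hℓ0 : ℓ = 0 := by
    have := h0.symm
    rwa [add_eq_left] at this
  rw [hℓ] at hℓ0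
  exact sub_eq_zero.mp hℓ0
end

section
/- Let s : ℤ/N_U → ℂ be a CAZAC sequence with |s(n)| = 1, and consider its periodic extension to length N = X·N_U. Received correlations at lag mN_U recover the CFO phase exactly in the noiseless case: for r(n) = e^{2πi nε_F/N}·Σ_{l=0}^{L-1} s(n-l) h_l with L ≤ N_U, the correlation R_m = Σ_{n=mN_U}^{N-1} r(n)·conj(r(n - mN_U))/(N - mN_U) satisfies R_m = e^{2πi m N_U ε_F / N} · σ², where σ² = (1/(N - mN_U))·Σ_{n=mN_U}^{N-1} Σ_{l=0}^{L-1} |s(n-l)|²|h_l|² = Σ_l |h_l|² (using zero autocorrelation of s and |s|=1), for each m ∈ {0,...,X/2}. -/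
open Complex

lemma sum_one_period {N_U : ℕ} [NeZero N_U] (f : ZMod N_U → ℂ) (b : ℕ) :
    ∑ n ∈ Finset.Ico b (b + N_U), f (n : ZMod N_U) = ∑ k : ZMod N_U, f k := by
  have hNU : 0 < N_U := NeZero.pos N_U
  refine Finset.sum_nbij' (fun n => (n : ZMod N_U))
    (fun k => b + ((k - (b : ZMod N_U)).val)) ?_ ?_ ?_ ?_ ?_
  · intro a _; exact Finset.mem_univ _
  · intro k _
    simp only [Finset.mem_Ico]
    exact ⟨Nat.le_add_right _ _, Nat.add_lt_add_left (ZMod.val_lt _) b⟩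
  · intro a ha
    simp only [Finset.mem_Ico] at ha
    have h1 : ((a : ZMod N_U) - (b : ZMod N_U)) = ((a - b : ℕ) : ZMod N_U) := by
      rw [Nat.cast_sub ha.1]
    rw [h1, ZMod.val_cast_of_lt (by omega)]
    omega
  · intro k _
    push_cast
    rw [ZMod.natCast_val, ZMod.cast_id]
    ring
  · intro a _; rfl

lemma sum_periods {N_U : ℕ} [NeZero N_U] (f : ZMod N_U → ℂ) (b c : ℕ) :
    ∑ n ∈ Finset.Ico b (b + c * N_U), f (n : ZMod N_U) = c * ∑ k : ZMod N_U, f k := by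
  induction c with
  | zero => simp
  | succ c ih =>
    have h1 : b ≤ b + c * N_U := Nat.le_add_right _ _
    have h2 : b + c * N_U ≤ b + (c + 1) * N_U := by nlinarith
    rw [← Finset.sum_Ico_consecutive _ h1 h2, ih]
    have h3 : b + (c + 1) * N_U = (b + c * N_U) + N_U := by ring
    rw [h3, sum_one_period]
    push_cast; ring

lemma corr_sum {N_U : ℕ} [NeZero N_U] (s : ZMod N_U → ℂ)
    (hamp : ∀ n : ZMod N_U, ‖s n‖ = 1)
    (hzac : ∀ τ : ZMod N_U, τ ≠ 0 → ∑ n : ZMod N_U, s n * (starRingEnd ℂ) (s (n - τ)) = 0)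
    (a b : ZMod N_U) :
    ∑ k : ZMod N_U, s (k - a) * (starRingEnd ℂ) (s (k - b))
      = if a = b then (N_U : ℂ) else 0 := by
  have key : ∑ k : ZMod N_U, s k * (starRingEnd ℂ) (s (k - (b - a)))
      = ∑ k : ZMod N_U, s (k - a) * (starRingEnd ℂ) (s (k - b)) := by
    apply Fintype.sum_bijective (fun k => k + a) (Equiv.addRight a).bijective
    intro k
    show s k * (starRingEnd ℂ) (s (k - (b - a)))
        = s (k + a - a) * (starRingEnd ℂ) (s (k + a - b))
    rw [add_sub_cancel_right]
    congr 2
    abel_nf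
  rw [← key]
  by_cases hab : a = b
  · subst hab
    simp only [sub_self, sub_zero, if_pos rfl]
    have : ∀ k : ZMod N_U, s k * (starRingEnd ℂ) (s k) = 1 := by
      intro k
      rw [Complex.mul_conj, Complex.normSq_eq_norm_sq, hamp]
      norm_num
    simp [this, Finset.card_univ, ZMod.card]
  · rw [if_neg hab, hzac (b - a) (sub_ne_zero.mpr (Ne.symm hab))]

theorem correlation_recovers_cfo_phase
    (X N_U N : ℕ) (hX : 0 < X) (hNU : 0 < N_U) [NeZero N_U] (hN : N = X * N_U)
    (s : ZMod N_U → ℂ)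
    (hamp : ∀ n : ZMod N_U, ‖s n‖ = 1)
    (hzac : ∀ τ : ZMod N_U, τ ≠ 0 → ∑ n : ZMod N_U, s n * (starRingEnd ℂ) (s (n - τ)) = 0)
    (L : ℕ) (hL : L ≤ N_U) (h : Fin L → ℂ)
    (εF : ℝ)
    (r : ℕ → ℂ)
    (hr : ∀ n : ℕ, r n = Complex.exp (2 * Real.pi * I * n * εF / N)
        * ∑ l : Fin L, s ((n : ZMod N_U) - (l : ℕ)) * h l)
    (m : ℕ) (hm : m ≤ X / 2) :
    (1 / ((N : ℂ) - m * N_U)) * ∑ n ∈ Finset.Ico (m * N_U) N, r n * (starRingEnd ℂ) (r (n - m * N_U))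
      = Complex.exp (2 * Real.pi * I * m * N_U * εF / N)
        * ((∑ l : Fin L, ‖h l‖^2 : ℝ) : ℂ) := by
  have hmX : m < X := lt_of_le_of_lt hm (Nat.div_lt_self hX one_lt_two)
  set E : ℂ := Complex.exp (2 * Real.pi * I * m * N_U * εF / N) with hE
  set F : ZMod N_U → ℂ := fun k =>
    (∑ l : Fin L, s (k - (l : ℕ)) * h l) *
      (starRingEnd ℂ) (∑ l : Fin L, s (k - (l : ℕ)) * h l) with hF
  -- pointwise identity on the interval
  have hpt : ∀ n ∈ Finset.Ico (m * N_U) N,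
      r n * (starRingEnd ℂ) (r (n - m * N_U)) = E * F (n : ZMod N_U) := by
    intro n hn
    simp only [Finset.mem_Ico] at hn
    have hle : m * N_U ≤ n := hn.1
    have hzmod : ((n - m * N_U : ℕ) : ZMod N_U) = (n : ZMod N_U) := by
      rw [Nat.cast_sub hle]
      push_cast
      simp [ZMod.natCast_self]
    rw [hr n, hr (n - m * N_U), hzmod]
    rw [map_mul, ← Complex.exp_conj]
    rw [mul_mul_mul_comm, ← Complex.exp_add]
    congr 2
    simp only [map_div₀, map_mul, map_ofNat, Complex.conj_ofReal, Complex.conj_I,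
      Complex.conj_natCast]
    rw [Nat.cast_sub hle]
    push_cast
    ring
  rw [Finset.sum_congr rfl hpt, ← Finset.mul_sum]
  -- the sum over full periods
  have hsplit : N = m * N_U + (X - m) * N_U := by
    rw [hN]
    have : X = m + (X - m) := by omega
    nlinarith [Nat.sub_add_cancel hmX.le]
  have hper : ∑ n ∈ Finset.Ico (m * N_U) N, F (n : ZMod N_U)
      = (X - m : ℕ) * ∑ k : ZMod N_U, F k := by
    rw [hsplit]
    exact sum_periods F (m * N_U) (X - m)
  -- evaluate the ZMod sum
  have hinj : ∀ l l' : Fin L, ((l : ℕ) : ZMod N_U) = ((l' : ℕ) : ZMod N_U) ↔ l = l' := by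
    intro l l'
    constructor
    · intro hcast
      have := congrArg ZMod.val hcast
      rw [ZMod.val_cast_of_lt (lt_of_lt_of_le l.2 hL),
        ZMod.val_cast_of_lt (lt_of_lt_of_le l'.2 hL)] at this
      exact Fin.ext this
    · intro hll; rw [hll]
  have hFsum : ∑ k : ZMod N_U, F k = (N_U : ℂ) * ∑ l : Fin L, ((‖h l‖)^2 : ℂ) := by
    have expand : ∀ k : ZMod N_U, F k = ∑ l : Fin L, ∑ l' : Fin L,
        (h l * (starRingEnd ℂ) (h l')) *
          (s (k - (l : ℕ)) * (starRingEnd ℂ) (s (k - (l' : ℕ)))) := by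
      intro k
      rw [hF]
      simp only [map_sum, map_mul]
      rw [Finset.sum_mul_sum]
      apply Finset.sum_congr rfl; intro l _
      apply Finset.sum_congr rfl; intro l' _
      ring
    simp only [expand]
    rw [Finset.sum_comm]
    have hswap : ∀ l : Fin L, ∑ k : ZMod N_U, ∑ l' : Fin L,
        (h l * (starRingEnd ℂ) (h l')) *
          (s (k - (l : ℕ)) * (starRingEnd ℂ) (s (k - (l' : ℕ))))
        = ∑ l' : Fin L, (h l * (starRingEnd ℂ) (h l')) *
            ∑ k : ZMod N_U, s (k - (l : ℕ)) * (starRingEnd ℂ) (s (k - (l' : ℕ))) := by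
      intro l
      rw [Finset.sum_comm]
      apply Finset.sum_congr rfl; intro l' _
      rw [Finset.mul_sum]
    simp only [hswap]
    have hcorr : ∀ l l' : Fin L,
        ∑ k : ZMod N_U, s (k - (l : ℕ)) * (starRingEnd ℂ) (s (k - (l' : ℕ)))
          = if l = l' then (N_U : ℂ) else 0 := by
      intro l l'
      rw [corr_sum s hamp hzac]
      simp [hinj l l']
    simp only [hcorr, mul_ite, mul_zero]
    rw [Finset.sum_congr rfl (fun l _ => Finset.sum_ite_eq _ l
      (fun l' => h l * (starRingEnd ℂ) (h l') * (N_U : ℂ)))]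
    simp only [Finset.mem_univ, if_pos]
    rw [Finset.mul_sum]
    apply Finset.sum_congr rfl; intro l _
    rw [Complex.mul_conj, Complex.normSq_eq_norm_sq]
    push_cast
    ring
  rw [hper, hFsum]
  have hDne : ((N : ℂ) - m * N_U) = ((X - m : ℕ) : ℂ) * (N_U : ℂ) := by
    rw [hN]
    push_cast [Nat.cast_sub hmX.le]
    ring
  have hD0 : ((X - m : ℕ) : ℂ) * (N_U : ℂ) ≠ 0 := by
    apply mul_ne_zero <;> simp [Nat.cast_ne_zero] <;> omega
  rw [hDne]
  push_cast
  field_simp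
  have ha := left_ne_zero_of_mul hD0
  have hb := right_ne_zero_of_mul hD0
  calc _ = E * (∑ x : Fin L, ((‖h x‖ : ℂ))^2) * (((X - m : ℕ) : ℂ) * (((X - m : ℕ) : ℂ))⁻¹)
        * ((N_U : ℂ) * (N_U : ℂ)⁻¹) := by ring
    _ = _ := by rw [mul_inv_cancel₀ ha, mul_inv_cancel₀ hb, mul_one, mul_one]
end

section
/- Monotone decrease of the minimized ICI power in N: for fixed X even and υ = X/2, ε ∈ [-1/2,1/2], each term Υ_m(X/2) = sin⁻²(π(X/2 + mX + ε)/N) + sin⁻²(π(X/2 - X - mX + ε)/N) satisfies Υ_m(X/2) ≤ sin⁻²(π(X/2 + mX - 1/2)/N) + sin⁻²(π(X/2 + mX + 1/2)/N); i.e., over ε ∈ [-1/2, 1/2] the function ε ↦ Υ_m(X/2) attains its maximum at ε = ±1/2. -/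
open Real

private lemma alg (C U V : ℝ) (h1 : -1 ≤ C) (h2 : C ≤ V) (h3 : V ≤ U) (h4 : U ≤ 1) :
    (1 - C*U) * ((V - C)/2)^2 ≤ (1 - C*V) * ((U - C)/2)^2 := by
  nlinarith [mul_nonneg (sub_nonneg.2 h3) (mul_nonneg (sub_nonneg.2 (h2.trans h3))
      (sub_nonneg.2 (by nlinarith : C*V ≤ 1))),
    mul_nonneg (sub_nonneg.2 h3) (mul_nonneg (sub_nonneg.2 h2)
      (sub_nonneg.2 (by nlinarith : C*C ≤ 1)))]

private lemma id1 (θ x : ℝ) :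
    sin (θ + x)^2 + sin (θ - x)^2 = 1 - cos (2*θ) * cos (2*x) := by
  rw [sin_add, sin_sub, cos_two_mul, cos_two_mul]
  linear_combination (2*(cos x)^2) * sin_sq_add_cos_sq θ + (2*(cos θ)^2) * sin_sq_add_cos_sq x

private lemma id2 (θ x : ℝ) :
    sin (θ + x) * sin (θ - x) = (cos (2*x) - cos (2*θ)) / 2 := by
  rw [sin_add, sin_sub, cos_two_mul, cos_two_mul]
  linear_combination ((cos x)^2) * sin_sq_add_cos_sq θ - ((cos θ)^2) * sin_sq_add_cos_sq x

private lemma mono' (θ a b : ℝ) (ha0 : 0 ≤ a) (hab : a ≤ b) (hθb : b < θ)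
    (hθ2 : θ + b ≤ π / 2) :
    1 / sin (θ + a)^2 + 1 / sin (θ - a)^2 ≤ 1 / sin (θ - b)^2 + 1 / sin (θ + b)^2 := by
  have hpi : (0:ℝ) < π := pi_pos
  have hb0 : 0 ≤ b := ha0.trans hab
  have hA1 : 0 < sin (θ + a) := sin_pos_of_pos_of_lt_pi (by linarith) (by linarith)
  have hA2 : 0 < sin (θ - a) := sin_pos_of_pos_of_lt_pi (by linarith) (by linarith)
  have hB1 : 0 < sin (θ + b) := sin_pos_of_pos_of_lt_pi (by linarith) (by linarith)
  have hB2 : 0 < sin (θ - b) := sin_pos_of_pos_of_lt_pi (by linarith) (by linarith)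
  have key : (sin (θ + a)^2 + sin (θ - a)^2) * (sin (θ - b)^2 * sin (θ + b)^2)
      ≤ (sin (θ - b)^2 + sin (θ + b)^2) * (sin (θ + a)^2 * sin (θ - a)^2) := by
    have e1 := id1 θ a
    have e2 := id1 θ b
    have p1 : sin (θ + a)^2 * sin (θ - a)^2 = ((cos (2*a) - cos (2*θ))/2)^2 := by
      rw [← id2 θ a]; ring
    have p2 : sin (θ + b)^2 * sin (θ - b)^2 = ((cos (2*b) - cos (2*θ))/2)^2 := by
      rw [← id2 θ b]; ring
    have hC1 : -1 ≤ cos (2*θ) := neg_one_le_cos _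
    have hCV : cos (2*θ) ≤ cos (2*b) := by
      have : 0 < (cos (2*b) - cos (2*θ))/2 := by
        rw [← id2 θ b]; positivity
      linarith
    have hVU : cos (2*b) ≤ cos (2*a) := by
      apply cos_le_cos_of_nonneg_of_le_pi (by linarith) (by linarith) (by linarith)
    have hU1 : cos (2*a) ≤ 1 := cos_le_one _
    have halg := alg (cos (2*θ)) (cos (2*a)) (cos (2*b)) hC1 hCV hVU hU1
    have L_eq : (sin (θ + a)^2 + sin (θ - a)^2) * (sin (θ - b)^2 * sin (θ + b)^2)
        = (1 - cos (2*θ) * cos (2*a)) * ((cos (2*b) - cos (2*θ))/2)^2 := by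
      rw [e1, ← p2]; ring
    have R_eq : (sin (θ - b)^2 + sin (θ + b)^2) * (sin (θ + a)^2 * sin (θ - a)^2)
        = (1 - cos (2*θ) * cos (2*b)) * ((cos (2*a) - cos (2*θ))/2)^2 := by
      rw [add_comm (sin (θ - b)^2), e2, ← p1]
    rw [L_eq, R_eq]; exact halg
  rw [div_add_div _ _ (by positivity) (by positivity),
      div_add_div _ _ (by positivity) (by positivity),
      div_le_div_iff₀ (by positivity) (by positivity)]
  linarith [key]

private lemma mono (θ a b : ℝ) (ha : |a| ≤ b) (hθb : b < θ) (hθ2 : θ + b ≤ π / 2) :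
    1 / sin (θ + a)^2 + 1 / sin (θ - a)^2 ≤ 1 / sin (θ - b)^2 + 1 / sin (θ + b)^2 := by
  rcases le_or_gt 0 a with h | h
  · exact mono' θ a b h (by rwa [abs_of_nonneg h] at ha) hθb hθ2
  · have := mono' θ (-a) b (by linarith) (by rwa [abs_of_neg h] at ha) hθb hθ2
    have e1 : θ + -a = θ - a := by ring
    have e2 : θ - -a = θ + a := by ring
    rw [e1, e2] at this
    linarith

theorem ici_term_even_and_max_at_endpoints
    (N X N_U : ℕ) (hN : N = X * N_U) (hXeven : Even X) (hX2 : 2 ≤ X)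
    (hNUpos : 0 < N_U) (hNUeven : Even N_U)
    (m : ℕ) (hm : m ≤ N_U / 2 - 1)
    (g : ℝ → ℝ)
    (hg : g = fun ε => 1 / (sin (π * ((X : ℝ) / 2 + m * X + ε) / N))^2
        + 1 / (sin (π * ((X : ℝ) / 2 + m * X - ε) / N))^2) :
    ∀ ε : ℝ, |ε| ≤ 1/2 → g ε = g (-ε) ∧ g ε ≤ g (1/2) := by
  intro ε hε
  have hpi : (0:ℝ) < π := pi_pos
  -- numeric facts
  have hNU2 : 2 ≤ N_U := by
    rcases hNUeven with ⟨k, hk⟩; omega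
  have hmNU : 2 * m + 2 ≤ N_U := by
    rcases hNUeven with ⟨k, hk⟩
    omega
  have hNpos : 0 < N := by
    rw [hN]; exact Nat.mul_pos (by omega) hNUpos
  have hNR : (0:ℝ) < (N:ℝ) := by exact_mod_cast hNpos
  have hXR : (2:ℝ) ≤ (X:ℝ) := by exact_mod_cast hX2
  set c : ℝ := (X:ℝ)/2 + m*X with hc
  have hc1 : 1 ≤ c := by
    have : (0:ℝ) ≤ (m:ℝ)*X := by positivity
    rw [hc]; linarith
  have hNatle : (2*m + 2) * X ≤ N := by
    calc (2*m + 2) * X ≤ N_U * X := Nat.mul_le_mul_right X hmNU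
      _ = X * N_U := Nat.mul_comm _ _
      _ = N := hN.symm
  have hNatR : ((2*(m:ℝ) + 2) * X : ℝ) ≤ (N:ℝ) := by exact_mod_cast hNatle
  have hcN : 2*c + 1 ≤ (N:ℝ) - 1 := by
    have hmX : (0:ℝ) ≤ (m:ℝ) * X := by positivity
    rw [hc]; nlinarith
  set θ : ℝ := π * c / N with hθ
  set b : ℝ := π * (1/2) / N with hb
  clear_value c θ b
  have hbpos : 0 < b := by rw [hb]; positivity
  have hθb : b < θ := by
    have heq : θ - b = π * (c - 1/2) / N := by rw [hθ, hb]; ring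
    have hpos : 0 < θ - b := by
      rw [heq]; exact div_pos (mul_pos hpi (by linarith)) hNR
    linarith
  have hθ2 : θ + b ≤ π / 2 := by
    have heq : θ + b = π * (c + 1/2) / N := by rw [hθ, hb]; ring
    rw [heq, div_le_iff₀ hNR]
    have hle : c + 1/2 ≤ (N:ℝ)/2 := by linarith
    nlinarith [mul_le_mul_of_nonneg_left hle hpi.le]
  have harg : ∀ x : ℝ, π * (c + x) / N = θ + π * x / N := by
    intro x; rw [hθ]; ring
  have harg2 : ∀ x : ℝ, π * (c - x) / N = θ - π * x / N := by
    intro x; rw [hθ]; ring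
  constructor
  · rw [hg]
    simp only
    rw [harg ε, harg2 ε, harg (-ε), harg2 (-ε)]
    have e1 : θ + π * (-ε) / N = θ - π * ε / N := by ring
    have e2 : θ - π * (-ε) / N = θ + π * ε / N := by ring
    rw [e1, e2]
    ring
  · rw [hg]
    simp only
    rw [harg ε, harg2 ε, harg (1/2), harg2 (1/2)]
    have hbb : π * (1/2) / N = b := by rw [hb]
    rw [hbb]
    have haabs : |π * ε / N| ≤ b := by
      rw [hb, abs_div, abs_mul, abs_of_pos hpi, abs_of_pos hNR]
      gcongr
    have := mono θ (π * ε / N) b haabs hθb hθ2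
    linarith
end
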